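/- Let x < y be real numbers, M a positive integer, γ ∈ ℂ, and let φ₁,…,φ_M, ψ₁,…,ψ_M : [x,y] → ℂ be measurable bounded functions. Define the kernel K(λ,μ) = Σ_{i=1}^{M} φᵢ(λ)·ψᵢ(μ) and the M×M matrix S with entries S_{ij} = ∫_x^y φᵢ(λ)·ψⱼ(λ) dλ. Then the Fredholm determinant series of K truncates and equals a finite determinant: 1 + Σ_{n=1}^{M} ((−γ)^n / n!) ∫_x^y dξ₁ ⋯ ∫_x^y dξₙ det( K(ξ_p, ξ_q) )_{p,q=1}^{n} = det( I_M − γS ), and moreover for every n > M the multiple integral ∫_{[x,y]ⁿ} det( K(ξ_p, ξ_q) )_{p,q=1}^{n} dξ₁⋯dξₙ vanishes. -/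

import Mathlib

open MeasureTheory

namespace FredholmRankAux

variable {M : ℕ}

lemma det_eq_det_subtype (A : Matrix (Fin M) (Fin M) ℂ) (s : Finset (Fin M))
    (h : ∀ i ∉ s, A i = (1 : Matrix (Fin M) (Fin M) ℂ) i) :
    A.det = Matrix.det (Matrix.of fun p q : {a : Fin M // a ∈ s} => A p q) := by
  classical
  let e : {a : Fin M // a ∈ s} ⊕ {a : Fin M // a ∉ s} ≃ Fin M := Equiv.sumCompl (· ∈ s)
  rw [← Matrix.det_submatrix_equiv_self e A]
  have hB : A.submatrix e e = Matrix.fromBlocks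
      (Matrix.of fun p q : {a : Fin M // a ∈ s} => A p q)
      (Matrix.of fun (p : {a : Fin M // a ∈ s}) (q : {a : Fin M // a ∉ s}) => A p q)
      0 1 := by
    ext i j
    cases i with
    | inl p =>
      cases j with
      | inl q => rfl
      | inr q => rfl
    | inr p =>
      cases j with
      | inl q =>
        have h1 : A.submatrix e e (Sum.inr p) (Sum.inl q) = A p q := rfl
        have h2 : A (p : Fin M) (q : Fin M) = 0 := by
          rw [h p p.2]
          exact Matrix.one_apply_ne (fun hpq => p.2 (hpq ▸ q.2))
        rw [h1, h2]
        simp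
      | inr q =>
        have h1 : A.submatrix e e (Sum.inr p) (Sum.inr q) = A p q := rfl
        rw [h1, h p p.2]
        by_cases hpq : p = q
        · subst hpq
          simp [Matrix.one_apply]
        · have : (p : Fin M) ≠ (q : Fin M) := fun hv => hpq (Subtype.ext hv)
          simp [Matrix.one_apply, this, hpq]
  rw [hB, Matrix.det_fromBlocks_zero₂₁, Matrix.det_one, mul_one]

lemma det_one_add_smul (c : ℂ) (S : Matrix (Fin M) (Fin M) ℂ) :
    (1 + c • S).det
      = ∑ s : Finset (Fin M), c ^ s.card *
          Matrix.det (Matrix.of fun p q : {a : Fin M // a ∈ s} => S p q) := by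
  classical
  set f := (Matrix.detRowAlternating :
      (Fin M → ℂ) [⋀^Fin M]→ₗ[ℂ] ℂ).toMultilinearMap with hf
  have key := f.map_add_univ
      (fun i => (c • S) i) (fun i => (1 : Matrix (Fin M) (Fin M) ℂ) i)
  have h1 : (1 + c • S).det
      = f ((fun i => (c • S) i) + fun i => (1 : Matrix (Fin M) (Fin M) ℂ) i) := by
    congr 1
    funext i j
    simp [Matrix.add_apply, add_comm]
  rw [h1, key]
  refine Finset.sum_congr rfl fun s _ => ?_
  have hm : (s.piecewise (fun i => (c • S) i) fun i => (1 : Matrix (Fin M) (Fin M) ℂ) i)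
      = s.piecewise (fun i => c • (s.piecewise (fun i => (S i : Fin M → ℂ))
          (fun i => (1 : Matrix (Fin M) (Fin M) ℂ) i)) i)
        (s.piecewise (fun i => (S i : Fin M → ℂ)) fun i => (1 : Matrix (Fin M) (Fin M) ℂ) i) := by
    funext i
    by_cases hi : i ∈ s
    · rw [Finset.piecewise_eq_of_mem _ _ _ hi, Finset.piecewise_eq_of_mem _ _ _ hi,
        Finset.piecewise_eq_of_mem _ _ _ hi]
      rfl
    · rw [Finset.piecewise_eq_of_notMem _ _ _ hi, Finset.piecewise_eq_of_notMem _ _ _ hi,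
        Finset.piecewise_eq_of_notMem _ _ _ hi]
  rw [hm, f.map_piecewise_smul (fun _ => c) _ s]
  rw [Finset.prod_const, smul_eq_mul]
  congr 1
  have hdet : f (s.piecewise (fun i => (S i : Fin M → ℂ)) fun i => (1 : Matrix (Fin M) (Fin M) ℂ) i)
      = Matrix.det (Matrix.of (s.piecewise (fun i => (S i : Fin M → ℂ))
          fun i => (1 : Matrix (Fin M) (Fin M) ℂ) i)) := rfl
  rw [hdet, det_eq_det_subtype _ s (fun i hi => Finset.piecewise_eq_of_notMem _ _ _ hi)]
  congr 1
  funext p q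
  show (s.piecewise (fun i => (S i : Fin M → ℂ)) _) (p : Fin M) (q : Fin M) = S p q
  exact congrFun (Finset.piecewise_eq_of_mem s (fun i => (S i : Fin M → ℂ))
    (fun i => (1 : Matrix (Fin M) (Fin M) ℂ) i) p.2) q


lemma det_submatrix_of_inj (S : Matrix (Fin M) (Fin M) ℂ) {n : ℕ} (f : Fin n → Fin M)
    (hf : Function.Injective f) (T : Finset (Fin M)) (hT : Finset.image f Finset.univ = T) :
    (S.submatrix f f).det = Matrix.det (Matrix.of fun p q : {a : Fin M // a ∈ T} => S p q) := by
  classical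
  have hmem : ∀ p : Fin n, f p ∈ T := fun p =>
    hT ▸ Finset.mem_image_of_mem f (Finset.mem_univ p)
  have hcard : Fintype.card {a : Fin M // a ∈ T} = n := by
    rw [Fintype.card_coe, ← hT, Finset.card_image_of_injective _ hf, Finset.card_univ,
      Fintype.card_fin]
  have hbij : Function.Bijective (fun p : Fin n => (⟨f p, hmem p⟩ : {a : Fin M // a ∈ T})) := by
    rw [Fintype.bijective_iff_injective_and_card]
    exact ⟨fun a b hab => hf (Subtype.ext_iff.mp hab), by rw [hcard, Fintype.card_fin]⟩
  let e : Fin n ≃ {a : Fin M // a ∈ T} := Equiv.ofBijective _ hbij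
  have : S.submatrix f f = (Matrix.of fun p q : {a : Fin M // a ∈ T} => S p q).submatrix e e := rfl
  rw [this, Matrix.det_submatrix_equiv_self]

lemma sum_det_submatrix (S : Matrix (Fin M) (Fin M) ℂ) (n : ℕ) :
    ∑ f : Fin n → Fin M, (S.submatrix f f).det
      = (n.factorial : ℂ) * ∑ T ∈ Finset.powersetCard n (Finset.univ : Finset (Fin M)),
          Matrix.det (Matrix.of fun p q : {a : Fin M // a ∈ T} => S p q) := by
  classical
  rw [← Finset.sum_filter_add_sum_filter_not Finset.univ (fun f => Function.Injective f)]
  have h0 : ∑ f ∈ Finset.univ.filter (fun f : Fin n → Fin M => ¬ Function.Injective f),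
      (S.submatrix f f).det = 0 := by
    refine Finset.sum_eq_zero fun f hf => ?_
    rw [Finset.mem_filter] at hf
    obtain ⟨p, p', heq, hne⟩ := Function.not_injective_iff.mp hf.2
    exact Matrix.det_zero_of_row_eq hne (funext fun q => by simp [Matrix.submatrix_apply, heq])
  rw [h0, add_zero]
  rw [← Finset.sum_fiberwise_of_maps_to
    (g := fun f : Fin n → Fin M => Finset.image f Finset.univ)
    (t := Finset.powersetCard n (Finset.univ : Finset (Fin M)))
    (fun f hf => by
      rw [Finset.mem_filter] at hf
      rw [Finset.mem_powersetCard]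
      exact ⟨Finset.subset_univ _, by
        rw [Finset.card_image_of_injective _ hf.2, Finset.card_univ, Fintype.card_fin]⟩)
    (fun f => (S.submatrix f f).det)]
  rw [Finset.mul_sum]
  refine Finset.sum_congr rfl fun T hT => ?_
  have hval : ∀ f ∈ (Finset.univ.filter (fun f : Fin n → Fin M => Function.Injective f)).filter
      (fun f => Finset.image f Finset.univ = T),
      (S.submatrix f f).det
        = Matrix.det (Matrix.of fun p q : {a : Fin M // a ∈ T} => S p q) := by
    intro f hf
    simp only [Finset.mem_filter, Finset.mem_univ, true_and] at hf
    exact det_submatrix_of_inj S f hf.1 T hf.2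
  rw [Finset.sum_congr rfl hval, Finset.sum_const]
  -- count the fiber
  have hTcard : T.card = n := (Finset.mem_powersetCard.mp hT).2
  have hcardT : Fintype.card {a : Fin M // a ∈ T} = n := by rw [Fintype.card_coe, hTcard]
  have hfiber : ((Finset.univ.filter (fun f : Fin n → Fin M => Function.Injective f)).filter
      (fun f => Finset.image f Finset.univ = T)).card
      = Fintype.card (Fin n ≃ {a : Fin M // a ∈ T}) := by
    rw [← Finset.card_univ]
    have hmemfiber : ∀ f : Fin n → Fin M,
        f ∈ (Finset.univ.filter (fun f : Fin n → Fin M => Function.Injective f)).filter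
          (fun f => Finset.image f Finset.univ = T)
        ↔ Function.Injective f ∧ Finset.image f Finset.univ = T := by
      intro f; simp [Finset.mem_filter, and_assoc]
    have hmem' : ∀ f : Fin n → Fin M, Finset.image f Finset.univ = T → ∀ p, f p ∈ T :=
      fun f hf p => hf ▸ Finset.mem_image_of_mem f (Finset.mem_univ p)
    let i : ∀ f : Fin n → Fin M, Function.Injective f → Finset.image f Finset.univ = T →
        (Fin n ≃ {a : Fin M // a ∈ T}) := fun f h1 h2 => Equiv.ofBijective
      (fun p => ⟨f p, hmem' f h2 p⟩) (by
        rw [Fintype.bijective_iff_injective_and_card]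
        exact ⟨fun a b hab => h1 (Subtype.ext_iff.mp hab), by rw [hcardT, Fintype.card_fin]⟩)
    refine Finset.card_bij'
      (fun f hf => i f ((hmemfiber f).mp hf).1 ((hmemfiber f).mp hf).2)
      (fun e _ => fun p => ((e p : {a : Fin M // a ∈ T}) : Fin M))
      (fun f hf => Finset.mem_univ _) ?_ ?_ ?_
    · intro e _
      rw [hmemfiber]
      refine ⟨fun a b hab => e.injective (Subtype.ext hab), ?_⟩
      ext a
      simp only [Finset.mem_image, Finset.mem_univ, true_and]
      constructor
      · rintro ⟨p, rfl⟩; exact (e p).2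
      · intro ha; exact ⟨e.symm ⟨a, ha⟩, by simp⟩
    · intro f hf; funext p; rfl
    · intro e he; exact Equiv.ext fun p => Subtype.ext rfl
  rw [hfiber, Fintype.card_equiv (Fintype.equivOfCardEq (by rw [hcardT, Fintype.card_fin])),
    Fintype.card_fin]
  simp [mul_comm]


lemma integral_det (x y : ℝ) (hxy : x < y)
    (φ ψ : Fin M → ℝ → ℂ)
    (hφm : ∀ i, Measurable (φ i)) (hψm : ∀ i, Measurable (ψ i))
    (hφb : ∀ i, ∃ C : ℝ, ∀ t ∈ Set.Icc x y, ‖φ i t‖ ≤ C)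
    (hψb : ∀ i, ∃ C : ℝ, ∀ t ∈ Set.Icc x y, ‖ψ i t‖ ≤ C) (n : ℕ) :
    (∫ ξ in Set.univ.pi (fun _ : Fin n => Set.Icc x y),
        Matrix.det (Matrix.of fun p q : Fin n => ∑ i : Fin M, φ i (ξ p) * ψ i (ξ q)))
      = ∑ f : Fin n → Fin M, Matrix.det
          ((Matrix.of fun i j : Fin M => ∫ t in Set.Icc x y, φ i t * ψ j t).submatrix f f) := by
  classical
  choose Cφ hCφ using hφb
  choose Cψ hCψ using hψb
  have hxmem : x ∈ Set.Icc x y := ⟨le_refl x, le_of_lt hxy⟩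
  have hCφ0 : ∀ i, 0 ≤ Cφ i := fun i => le_trans (norm_nonneg _) (hCφ i x hxmem)
  have hCψ0 : ∀ i, 0 ≤ Cψ i := fun i => le_trans (norm_nonneg _) (hCψ i x hxmem)
  set box : Set (Fin n → ℝ) := Set.univ.pi (fun _ : Fin n => Set.Icc x y) with hbox_def
  have hbox : MeasurableSet box := MeasurableSet.univ_pi (fun _ => measurableSet_Icc)
  have hboxfin : (volume : Measure (Fin n → ℝ)) box < ⊤ := by
    rw [hbox_def, volume_pi_pi]
    exact ENNReal.prod_lt_top (fun p _ => by rw [Real.volume_Icc]; exact ENNReal.ofReal_lt_top)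
  have hfinmeas : IsFiniteMeasure ((volume : Measure (Fin n → ℝ)).restrict box) :=
    ⟨by rw [Measure.restrict_apply_univ]; exact hboxfin⟩
  -- pointwise expansion of the determinant
  have hpt : ∀ ξ : Fin n → ℝ,
      Matrix.det (Matrix.of fun p q : Fin n => ∑ i : Fin M, φ i (ξ p) * ψ i (ξ q))
      = ∑ f : Fin n → Fin M, ∑ σ : Equiv.Perm (Fin n),
          ((Equiv.Perm.sign σ : ℤ) : ℂ) * ∏ p : Fin n,
            (φ (f p) (ξ p) * ψ (f (σ p)) (ξ p)) := by
    intro ξ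
    set g := (Matrix.detRowAlternating : (Fin n → ℂ) [⋀^Fin n]→ₗ[ℂ] ℂ).toMultilinearMap with hg
    have h1 : (fun p => ∑ i : Fin M, φ i (ξ p) • (fun q => ψ i (ξ q)) : Fin n → Fin n → ℂ)
        = Matrix.of fun p q : Fin n => ∑ i : Fin M, φ i (ξ p) * ψ i (ξ q) := by
      funext p q
      simp [Finset.sum_apply]
    have h0 : Matrix.det (Matrix.of fun p q : Fin n => ∑ i : Fin M, φ i (ξ p) * ψ i (ξ q))
        = g (fun p => ∑ i : Fin M, φ i (ξ p) • (fun q => ψ i (ξ q))) := by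
      rw [h1]; rfl
    rw [h0, g.map_sum]
    refine Finset.sum_congr rfl fun f _ => ?_
    rw [g.map_smul_univ]
    have h2 : g (fun p => fun q => ψ (f p) (ξ q))
        = Matrix.det (Matrix.of fun p q : Fin n => ψ (f p) (ξ q)) := rfl
    rw [h2, Matrix.det_apply', smul_eq_mul, Finset.mul_sum]
    refine Finset.sum_congr rfl fun σ _ => ?_
    have h3 : ∀ q : Fin n, (Matrix.of fun p q : Fin n => ψ (f p) (ξ q)) (σ q) q
        = ψ (f (σ q)) (ξ q) := fun q => rfl
    simp only [h3]
    rw [Finset.prod_mul_distrib]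
    ring
  -- measurability and integrability of each term
  have hterm_meas : ∀ (f : Fin n → Fin M) (σ : Equiv.Perm (Fin n)),
      Measurable (fun ξ : Fin n → ℝ => ∏ p : Fin n, (φ (f p) (ξ p) * ψ (f (σ p)) (ξ p))) := by
    intro f σ
    apply Finset.measurable_prod
    intro p _
    exact ((hφm (f p)).comp (measurable_pi_apply p)).mul
      ((hψm (f (σ p))).comp (measurable_pi_apply p))
  have hterm_int : ∀ (f : Fin n → Fin M) (σ : Equiv.Perm (Fin n)),
      Integrable (fun ξ : Fin n → ℝ => ∏ p : Fin n, (φ (f p) (ξ p) * ψ (f (σ p)) (ξ p)))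
        ((volume : Measure (Fin n → ℝ)).restrict box) := by
    intro f σ
    refine Integrable.mono'
      (integrable_const (∏ p : Fin n, (Cφ (f p) * Cψ (f (σ p)))))
      ((hterm_meas f σ).aestronglyMeasurable) ?_
    refine (ae_restrict_mem hbox).mono fun ξ hξ => ?_
    rw [norm_prod]
    refine Finset.prod_le_prod (fun p _ => norm_nonneg _) fun p _ => ?_
    have hp : ξ p ∈ Set.Icc x y := hξ p (Set.mem_univ p)
    rw [norm_mul]
    exact mul_le_mul (hCφ _ _ hp) (hCψ _ _ hp) (norm_nonneg _) (hCφ0 _)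
  -- Fubini on the box
  have hfub : ∀ h : Fin n → ℝ → ℂ, (∀ p, Measurable (h p)) →
      (∫ ξ in box, ∏ p : Fin n, h p (ξ p)) = ∏ p : Fin n, ∫ t in Set.Icc x y, h p t := by
    intro h hm
    rw [← MeasureTheory.integral_indicator hbox]
    have hind : Set.indicator box (fun ξ : Fin n → ℝ => ∏ p : Fin n, h p (ξ p))
        = fun ξ : Fin n → ℝ => ∏ p : Fin n, Set.indicator (Set.Icc x y) (h p) (ξ p) := by
      funext ξ
      by_cases hξ : ξ ∈ box
      · rw [Set.indicator_of_mem hξ]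
        exact Finset.prod_congr rfl fun p _ =>
          (Set.indicator_of_mem (hξ p (Set.mem_univ p)) _).symm
      · rw [Set.indicator_of_notMem hξ]
        rw [hbox_def, Set.mem_univ_pi] at hξ
        push_neg at hξ
        obtain ⟨p, hp⟩ := hξ
        exact (Finset.prod_eq_zero (Finset.mem_univ p) (Set.indicator_of_notMem hp _)).symm
    rw [hind]
    exact (MeasureTheory.integral_fintype_prod_eq_prod (μ := fun _ => volume)
        (f := fun p => Set.indicator (Set.Icc x y) (h p))).trans
      (Finset.prod_congr rfl fun p _ => integral_indicator measurableSet_Icc)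
  -- put everything together
  rw [MeasureTheory.integral_congr_ae (Filter.Eventually.of_forall hpt)]
  rw [MeasureTheory.integral_finset_sum _ (fun f _ =>
    integrable_finset_sum _ (fun σ _ => (hterm_int f σ).const_mul _))]
  refine Finset.sum_congr rfl fun f _ => ?_
  rw [MeasureTheory.integral_finset_sum _ (fun σ _ => (hterm_int f σ).const_mul _)]
  set N := (Matrix.of fun i j : Fin M => ∫ t in Set.Icc x y, φ i t * ψ j t).submatrix f f
    with hN
  have hσ : ∀ σ : Equiv.Perm (Fin n),
      (∫ ξ in box, ((Equiv.Perm.sign σ : ℤ) : ℂ) * ∏ p : Fin n,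
          (φ (f p) (ξ p) * ψ (f (σ p)) (ξ p)))
      = ((Equiv.Perm.sign σ : ℤ) : ℂ) * ∏ p : Fin n, Matrix.transpose N (σ p) p := by
    intro σ
    rw [integral_const_mul]
    congr 1
    rw [hfub (fun p t => φ (f p) t * ψ (f (σ p)) t) (fun p => (hφm _).mul (hψm _))]
    rfl
  rw [Finset.sum_congr rfl fun σ _ => hσ σ, ← Matrix.det_apply', Matrix.det_transpose]


end FredholmRankAux

/-- For the finite-rank kernel `K(λ,μ) = Σᵢ φᵢ(λ)ψᵢ(μ)` on `[x,y]` with overlap matrix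
`S_{ij} = ∫_x^y φᵢ ψⱼ`, the Fredholm determinant series truncates at order `M` and equals
`det(I_M − γS)`; moreover all multiple integrals of determinants of order `n > M` vanish. -/
theorem fredholm_det_finite_rank_eq_matrix_det
    (x y : ℝ) (hxy : x < y) (M : ℕ) (hM : 0 < M) (γ : ℂ)
    (φ ψ : Fin M → ℝ → ℂ)
    (hφm : ∀ i, Measurable (φ i)) (hψm : ∀ i, Measurable (ψ i))
    (hφb : ∀ i, ∃ C : ℝ, ∀ t ∈ Set.Icc x y, ‖φ i t‖ ≤ C)
    (hψb : ∀ i, ∃ C : ℝ, ∀ t ∈ Set.Icc x y, ‖ψ i t‖ ≤ C) :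
    (1 + ∑ n ∈ Finset.Icc 1 M, ((-γ) ^ n / (n.factorial : ℂ)) *
          ∫ ξ in Set.univ.pi (fun _ : Fin n => Set.Icc x y),
            Matrix.det (Matrix.of fun p q : Fin n => ∑ i : Fin M, φ i (ξ p) * ψ i (ξ q))
        = Matrix.det (1 - γ • Matrix.of (fun i j : Fin M =>
            ∫ t in Set.Icc x y, φ i t * ψ j t))) ∧
      ∀ n : ℕ, M < n →
        (∫ ξ in Set.univ.pi (fun _ : Fin n => Set.Icc x y),
            Matrix.det (Matrix.of fun p q : Fin n => ∑ i : Fin M, φ i (ξ p) * ψ i (ξ q))) = 0 := by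
  classical
  have hint := FredholmRankAux.integral_det x y hxy φ ψ hφm hψm hφb hψb
  have hstep : ∀ n : ℕ,
      (∫ ξ in Set.univ.pi (fun _ : Fin n => Set.Icc x y),
          Matrix.det (Matrix.of fun p q : Fin n => ∑ i : Fin M, φ i (ξ p) * ψ i (ξ q)))
      = (n.factorial : ℂ) * ∑ T ∈ Finset.powersetCard n (Finset.univ : Finset (Fin M)),
          Matrix.det (Matrix.of fun p q : {a : Fin M // a ∈ T} =>
            (Matrix.of fun i j : Fin M => ∫ t in Set.Icc x y, φ i t * ψ j t) p q) :=
    fun n => by rw [hint n, FredholmRankAux.sum_det_submatrix]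
  constructor
  · have hterm : ∀ n ∈ Finset.Icc 1 M,
        ((-γ) ^ n / (n.factorial : ℂ)) *
            (∫ ξ in Set.univ.pi (fun _ : Fin n => Set.Icc x y),
              Matrix.det (Matrix.of fun p q : Fin n => ∑ i : Fin M, φ i (ξ p) * ψ i (ξ q)))
        = (-γ) ^ n * ∑ T ∈ Finset.powersetCard n (Finset.univ : Finset (Fin M)),
            Matrix.det (Matrix.of fun p q : {a : Fin M // a ∈ T} =>
              (Matrix.of fun i j : Fin M => ∫ t in Set.Icc x y, φ i t * ψ j t) p q) := by
      intro n _
      rw [hstep n]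
      have hfac : ((n.factorial : ℂ)) ≠ 0 := Nat.cast_ne_zero.mpr n.factorial_ne_zero
      field_simp
    rw [Finset.sum_congr rfl hterm]
    have hrange : Finset.range (M + 1) = insert 0 (Finset.Icc 1 M) := by
      ext a
      simp only [Finset.mem_range, Finset.mem_insert, Finset.mem_Icc]
      omega
    have h0 : (0 : ℕ) ∉ Finset.Icc 1 M := by simp
    have hzero : (-γ) ^ (0 : ℕ) * ∑ T ∈ Finset.powersetCard 0 (Finset.univ : Finset (Fin M)),
        Matrix.det (Matrix.of fun p q : {a : Fin M // a ∈ T} =>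
          (Matrix.of fun i j : Fin M => ∫ t in Set.Icc x y, φ i t * ψ j t) p q) = 1 := by
      rw [Finset.powersetCard_zero, Finset.sum_singleton, pow_zero, one_mul]
      haveI : IsEmpty {a : Fin M // a ∈ (∅ : Finset (Fin M))} :=
        ⟨fun a => absurd a.2 (Finset.notMem_empty a.1)⟩
      exact Matrix.det_isEmpty
    have hsum : ∑ n ∈ Finset.range (M + 1),
        (-γ) ^ n * ∑ T ∈ Finset.powersetCard n (Finset.univ : Finset (Fin M)),
          Matrix.det (Matrix.of fun p q : {a : Fin M // a ∈ T} =>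
            (Matrix.of fun i j : Fin M => ∫ t in Set.Icc x y, φ i t * ψ j t) p q)
        = 1 + ∑ n ∈ Finset.Icc 1 M,
          (-γ) ^ n * ∑ T ∈ Finset.powersetCard n (Finset.univ : Finset (Fin M)),
            Matrix.det (Matrix.of fun p q : {a : Fin M // a ∈ T} =>
              (Matrix.of fun i j : Fin M => ∫ t in Set.Icc x y, φ i t * ψ j t) p q) := by
      rw [hrange, Finset.sum_insert h0, hzero]
    rw [← hsum]
    have hinner : ∀ n ∈ Finset.range (M + 1),
        (-γ) ^ n * ∑ T ∈ Finset.powersetCard n (Finset.univ : Finset (Fin M)),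
          Matrix.det (Matrix.of fun p q : {a : Fin M // a ∈ T} =>
            (Matrix.of fun i j : Fin M => ∫ t in Set.Icc x y, φ i t * ψ j t) p q)
        = ∑ T ∈ Finset.powersetCard n (Finset.univ : Finset (Fin M)),
          (-γ) ^ T.card * Matrix.det (Matrix.of fun p q : {a : Fin M // a ∈ T} =>
            (Matrix.of fun i j : Fin M => ∫ t in Set.Icc x y, φ i t * ψ j t) p q) := by
      intro n _
      rw [Finset.mul_sum]
      exact Finset.sum_congr rfl fun T hT => by
        rw [(Finset.mem_powersetCard.mp hT).2]
    rw [Finset.sum_congr rfl hinner]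
    have hcard : (Finset.univ : Finset (Fin M)).card = M := by
      rw [Finset.card_univ, Fintype.card_fin]
    have hpows : ∑ n ∈ Finset.range (M + 1),
        ∑ T ∈ Finset.powersetCard n (Finset.univ : Finset (Fin M)),
          (-γ) ^ T.card * Matrix.det (Matrix.of fun p q : {a : Fin M // a ∈ T} =>
            (Matrix.of fun i j : Fin M => ∫ t in Set.Icc x y, φ i t * ψ j t) p q)
        = ∑ T ∈ (Finset.univ : Finset (Fin M)).powerset,
          (-γ) ^ T.card * Matrix.det (Matrix.of fun p q : {a : Fin M // a ∈ T} =>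
            (Matrix.of fun i j : Fin M => ∫ t in Set.Icc x y, φ i t * ψ j t) p q) := by
      rw [Finset.powerset_card_disjiUnion]; simp only [Finset.sum_disjiUnion, hcard]
    rw [hpows, Finset.powerset_univ, ← FredholmRankAux.det_one_add_smul]
    congr 1
    rw [neg_smul, ← sub_eq_add_neg]
  · intro n hn
    rw [hint n, FredholmRankAux.sum_det_submatrix]
    have hempty : Finset.powersetCard n (Finset.univ : Finset (Fin M)) = ∅ :=
      Finset.powersetCard_eq_empty.mpr (by
        rw [Finset.card_univ, Fintype.card_fin]; omega)
    rw [hempty, Finset.sum_empty, mul_zero]
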